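/- A D-loop Q(·) is isotopic to a group if and only if Φ₁ = {φ₁ ∘ φ_j⁻¹ : j ∈ Q} is closed under composition of permutations. -/

import Mathlib

/-- A binary operation `mul` on `Q` is isotopic to a group if there are a group
operation on `Q` and bijections `α, β, γ` of `Q` with `γ(x·y) = α(x)*β(y)`. -/
def IsotopicToGroup {Q : Type*} (mul : Q → Q → Q) : Prop :=
  ∃ (g : Q → Q → Q) (e : Q) (ginv : Q → Q),
    (∀ a b c, g (g a b) c = g a (g b c)) ∧
    (∀ a, g e a = a) ∧ (∀ a, g a e = a) ∧
    (∀ a, g (ginv a) a = e) ∧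
    ∃ α β γ : Q → Q, Function.Bijective α ∧ Function.Bijective β ∧
      Function.Bijective γ ∧ ∀ x y, γ (mul x y) = g (α x) (β y)

/-- A D-loop `Q(·)` is isotopic to a group iff
`Φ₁ = {φ₁ ∘ φ_j⁻¹ : j ∈ Q}` is closed under composition of permutations. -/
theorem stmt_14 {Q : Type*} (mul : Q → Q → Q) (one : Q)
    (hone_mul : ∀ x, mul one x = x) (hmul_one : ∀ x, mul x one = x)
    (hL : ∀ a, Function.Bijective (fun x => mul a x))
    (hR : ∀ a, Function.Bijective (fun x => mul x a))
    (rinv : Q → Q) (hrinv : ∀ a, mul a (rinv a) = one)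
    (hD : ∀ x y, rinv (mul x y) = mul (rinv y) (rinv x))
    (φ : Q → Equiv.Perm Q) (hφ : ∀ a x, mul x (φ a x) = a) :
    IsotopicToGroup mul ↔
      (∀ f g : Equiv.Perm Q,
        f ∈ {f : Equiv.Perm Q | ∃ j, f = φ one * (φ j)⁻¹} →
        g ∈ {f : Equiv.Perm Q | ∃ j, f = φ one * (φ j)⁻¹} →
        f * g ∈ {f : Equiv.Perm Q | ∃ j, f = φ one * (φ j)⁻¹}) := by
  -- basic facts about D-loops
  have hLinj : ∀ a : Q, Function.Injective (fun x => mul a x) := fun a => (hL a).1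
  have φ1_eq : ∀ x, φ one x = rinv x := by
    intro x
    exact hLinj x (show mul x (φ one x) = mul x (rinv x) from (hφ one x).trans (hrinv x).symm)
  have hρbij : Function.Bijective rinv := by
    have h : rinv = ⇑(φ one) := funext fun x => (φ1_eq x).symm
    rw [h]; exact (φ one).bijective
  have rinv_one : rinv one = one :=
    hLinj one (show mul one (rinv one) = mul one one from (hrinv one).trans (hone_mul one).symm)
  have hρl : ∀ z, mul (rinv z) z = one := by
    intro z
    obtain ⟨x, rfl⟩ := hρbij.2 z
    have h := hD x (rinv x)
    rw [hrinv x, rinv_one] at h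
    exact h.symm
  have ρρ : ∀ v, rinv (rinv v) = v := by
    intro v
    exact hLinj (rinv v)
      (show mul (rinv v) (rinv (rinv v)) = mul (rinv v) v from (hrinv (rinv v)).trans (hρl v).symm)
  -- the track characterization (★)
  have star : ∀ j y, mul (rinv y) ((φ one * (φ j)⁻¹) y) = rinv j := by
    intro j y
    have hx : mul ((φ j)⁻¹ y) y = j := by
      have h := hφ j ((φ j)⁻¹ y)
      rwa [← Equiv.Perm.mul_apply, mul_inv_cancel, Equiv.Perm.one_apply] at h
    have h := hD ((φ j)⁻¹ y) y
    rw [hx] at h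
    have happ : (φ one * (φ j)⁻¹) y = rinv ((φ j)⁻¹ y) := by
      rw [Equiv.Perm.mul_apply, φ1_eq]
    rw [happ]
    exact h.symm
  have uniq : ∀ j y c, mul (rinv y) c = rinv j → (φ one * (φ j)⁻¹) y = c := by
    intro j y c h
    exact hLinj (rinv y) ((star j y).trans h.symm)
  constructor
  · -- isotopic to group → spins closed
    rintro ⟨g, e, ginv, hassoc, hel, her, hinvl, α, β, γ, hα, hβ, hγ, hiso⟩
    intro f f' hf hf'
    obtain ⟨j, rfl⟩ := hf
    obtain ⟨k, rfl⟩ := hf'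
    letI : Mul Q := ⟨g⟩
    letI : One Q := ⟨e⟩
    letI : Inv Q := ⟨ginv⟩
    letI : Group Q := Group.ofLeftAxioms hassoc hel hinvl
    set γe := Equiv.ofBijective γ hγ with hγe
    refine ⟨rinv (γe.symm (γ (rinv k) * (γ one)⁻¹ * γ (rinv j))), ?_⟩
    set m := rinv (γe.symm (γ (rinv k) * (γ one)⁻¹ * γ (rinv j))) with hmdef
    have em : γ (rinv m) = γ (rinv k) * (γ one)⁻¹ * γ (rinv j) := by
      rw [hmdef, ρρ]
      exact γe.apply_symm_apply _
    refine Equiv.ext fun y => ?_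
    rw [Equiv.Perm.mul_apply]
    refine (uniq m y _ ?_).symm
    -- let v := σ_k y, w := σ_j v
    have h1 := star k y
    have h2 := star j ((φ one * (φ k)⁻¹) y)
    have h3 := hρl ((φ one * (φ k)⁻¹) y)
    apply hγ.1
    rw [hiso, em]
    have e1 : γ (rinv k) = α (rinv y) * β ((φ one * (φ k)⁻¹) y) := by
      have h := hiso (rinv y) ((φ one * (φ k)⁻¹) y)
      rw [h1] at h; exact h
    have e2 : γ (rinv j) = α (rinv ((φ one * (φ k)⁻¹) y)) *
        β ((φ one * (φ j)⁻¹) ((φ one * (φ k)⁻¹) y)) := by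
      have h := hiso (rinv ((φ one * (φ k)⁻¹) y)) ((φ one * (φ j)⁻¹) ((φ one * (φ k)⁻¹) y))
      rw [h2] at h; exact h
    have e3 : γ one = α (rinv ((φ one * (φ k)⁻¹) y)) * β ((φ one * (φ k)⁻¹) y) := by
      have h := hiso (rinv ((φ one * (φ k)⁻¹) y)) ((φ one * (φ k)⁻¹) y)
      rw [h3] at h; exact h
    rw [e1, e2, e3]
    show α (rinv y) * β ((φ one * (φ j)⁻¹) ((φ one * (φ k)⁻¹) y)) = _
    group
  · -- spins closed → the loop itself is a group
    intro hclosed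
    have keyI : ∀ u v w, mul (rinv (mul u v)) (mul u w) = mul (rinv v) w := by
      intro u v w
      obtain ⟨m, hm⟩ := hclosed (φ one * (φ (rinv (mul (rinv v) w)))⁻¹)
        (φ one * (φ (rinv (mul u v)))⁻¹) ⟨_, rfl⟩ ⟨_, rfl⟩
      have hv : (φ one * (φ (rinv (mul u v)))⁻¹) (rinv u) = v := by
        apply uniq
        rw [ρρ, ρρ]
      have hw : (φ one * (φ (rinv (mul (rinv v) w)))⁻¹) v = w := by
        apply uniq
        rw [ρρ]
      have h : ((φ one * (φ (rinv (mul (rinv v) w)))⁻¹) *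
          (φ one * (φ (rinv (mul u v)))⁻¹)) (rinv u) = (φ one * (φ m)⁻¹) (rinv u) := by
        rw [hm]
      rw [Equiv.Perm.mul_apply, hv, hw] at h
      -- h : w = σ_m (rinv u)
      have h4 : mul u w = rinv m := by
        have h' := star m (rinv u)
        rwa [ρρ, ← h] at h'
      have h5 : (φ one * (φ m)⁻¹) one = rinv m := by
        apply uniq
        rw [rinv_one, hone_mul]
      have h6 : (φ one * (φ (rinv (mul u v)))⁻¹) one = rinv (rinv (mul u v)) := by
        apply uniq
        rw [rinv_one, hone_mul]
      have h7 : (φ one * (φ (rinv (mul (rinv v) w)))⁻¹) (rinv (rinv (mul u v))) = rinv m := by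
        have h' : ((φ one * (φ (rinv (mul (rinv v) w)))⁻¹) *
            (φ one * (φ (rinv (mul u v)))⁻¹)) one = (φ one * (φ m)⁻¹) one := by
          rw [hm]
        rwa [Equiv.Perm.mul_apply, h6, h5] at h'
      have h8 := star (rinv (mul (rinv v) w)) (rinv (rinv (mul u v)))
      rw [h7] at h8
      simp only [ρρ] at h8
      rwa [← h4] at h8
    have hLIP : ∀ u w, mul (rinv u) (mul u w) = w := by
      intro u w
      have h := keyI u one w
      rwa [hmul_one, rinv_one, hone_mul] at h
    have hassoc : ∀ a b c, mul (mul a b) c = mul a (mul b c) := by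
      intro a b c
      refine hLinj (rinv (mul a b)) ?_
      show mul (rinv (mul a b)) (mul (mul a b) c) = mul (rinv (mul a b)) (mul a (mul b c))
      rw [hLIP, keyI, hLIP]
    exact ⟨mul, one, rinv, hassoc, hone_mul, hmul_one, hρl, id, id, id,
      Function.bijective_id, Function.bijective_id, Function.bijective_id, fun x y => rfl⟩
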